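/- Let $k$ be a field of characteristic not 2 or 3, and let $\mathfrak{g}$ and $\mathfrak{g}'$ be Lie algebras over $k$ with an isomorphism $\phi : \mathfrak{g} \to \mathfrak{g}'$. Set $\mathcal{Z}_{\mathfrak{g}}(\mathfrak{g}') = \{f \in \mathrm{Hom}(\mathfrak{g},\mathfrak{g}') : f \circ \mathrm{ad}(x) = \mathrm{ad}(\phi(x)) \circ f \ \forall x \in \mathfrak{g}\}$. Define $\tilde{\mathfrak{g}} = \mathfrak{g} \oplus (\mathfrak{g}' \oplus \mathcal{Z}_{\mathfrak{g}}(\mathfrak{g}'))$ with even part $\mathfrak{g}$, odd part $\mathfrak{g}' \oplus \mathcal{Z}_{\mathfrak{g}}(\mathfrak{g}')$, and bracket given by: the Lie bracket on $\mathfrak{g}$; $\{x,v\} = [\phi(x),v]$ for $x \in \mathfrak{g}$, $v \in \mathfrak{g}'$; $\{x,f\} = 0$ for $f \in \mathcal{Z}_{\mathfrak{g}}(\mathfrak{g}')$; $\{v,w\} = \{f,g\} = 0$ for $v,w \in \mathfrak{g}'$, $f,g \in \mathcal{Z}_{\mathfrak{g}}(\mathfrak{g}')$; and $\{v,f\} =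 \phi^{-1}(f(\phi^{-1}(v)))$. Then $\tilde{\mathfrak{g}}$ is a Lie superalgebra. -/

import Mathlib

section

variable {k g g' : Type*} [Field k] [LieRing g] [LieAlgebra k g] [LieRing g'] [LieAlgebra k g']

/-- The space `Z_𝔤(𝔤')` of linear maps `f : 𝔤 → 𝔤'` intertwining the adjoint actions via
an isomorphism `φ : 𝔤 → 𝔤'`. -/
def centroid (φ : g ≃ₗ⁅k⁆ g') : Submodule k (g →ₗ[k] g') where
  carrier := {f | ∀ x v : g, f ⁅x, v⁆ = ⁅φ x, f v⁆}
  add_mem' := by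
    intro f h hf hh x v
    simp [hf x v, hh x v]
  zero_mem' := by
    intro x v
    simp
  smul_mem' := by
    intro c f hf x v
    simp [hf x v]

lemma lieEquiv_map_zero {φ : g ≃ₗ⁅k⁆ g'} : φ (0 : g) = 0 := by
  rw [← LieEquiv.coe_toLinearEquiv]
  exact map_zero _

lemma lieEquiv_map_add {φ : g ≃ₗ⁅k⁆ g'} (x y : g) : φ (x + y) = φ x + φ y := by
  rw [← LieEquiv.coe_toLinearEquiv]
  exact map_add _ x y

lemma centroid_lie {φ : g ≃ₗ⁅k⁆ g'} (f : centroid φ) (u v : g) :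
    ⁅f.1 u, φ v⁆ = f.1 ⁅u, v⁆ := by
  have h := f.2 v u
  rw [← lie_skew, ← h, ← lie_skew u v, map_neg]

lemma symm_lie {φ : g ≃ₗ⁅k⁆ g'} (x : g) (w : g') :
    φ.symm ⁅φ x, w⁆ = ⁅x, φ.symm w⁆ := by
  rw [φ.symm.map_lie (φ x) w, φ.symm_apply_apply]

/-- Given an isomorphism `φ : 𝔤 → 𝔤'` of Lie algebras over a field of
characteristic not 2 or 3, the space `𝔤 ⊕ (𝔤' ⊕ Z_𝔤(𝔤'))` with even part `𝔤`, odd part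
`𝔤' ⊕ Z_𝔤(𝔤')`, the given action and the bracket `P` described in the paper is a Lie
superalgebra: `P` is symmetric and satisfies the identities (1) and (2). -/
theorem stmt_16 (h2 : (2 : k) ≠ 0) (h3 : (3 : k) ≠ 0) (φ : g ≃ₗ⁅k⁆ g') :
    let O := g' × centroid φ
    let act : g → O → O := fun x p => (⁅φ x, p.1⁆, 0)
    let Pm : O → O → g := fun p q =>
      φ.symm (p.2.1 (φ.symm q.1)) + φ.symm (q.2.1 (φ.symm p.1))
    (∀ p q : O, Pm p q = Pm q p) ∧
    (∀ p q r : O, act (Pm p q) r + act (Pm q r) p + act (Pm r p) q = 0) ∧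
    (∀ (x : g) (p q : O), ⁅x, Pm p q⁆ = Pm (act x p) q + Pm p (act x q)) := by
  intro O act Pm
  refine ⟨fun p q => add_comm _ _, ?_, ?_⟩
  · intro p q r
    have hv : ∀ v : g', v = φ (φ.symm v) := fun v => (φ.apply_symm_apply v).symm
    have key : ∀ (f : centroid φ) (u v : g),
        ⁅φ (φ.symm (f.1 u)), φ v⁆ = f.1 ⁅u, v⁆ := by
      intro f u v
      rw [φ.apply_symm_apply]
      exact centroid_lie f u v
    refine Prod.ext ?_ (by show ((0 : centroid φ) + 0 + 0 : centroid φ) = 0; simp)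
    show (⁅φ (Pm p q), r.1⁆ + ⁅φ (Pm q r), p.1⁆ + ⁅φ (Pm r p), q.1⁆ : g') = 0
    rw [hv r.1, hv p.1, hv q.1]
    simp only [Pm, lieEquiv_map_add, add_lie, key]
    rw [← lie_skew (φ.symm q.1) (φ.symm r.1), ← lie_skew (φ.symm r.1) (φ.symm p.1),
      ← lie_skew (φ.symm p.1) (φ.symm q.1), map_neg, map_neg, map_neg]
    abel
  · intro x p q
    have key : ∀ (f : centroid φ) (v : g'),
        φ.symm (f.1 (φ.symm ⁅φ x, v⁆)) = ⁅x, φ.symm (f.1 (φ.symm v))⁆ := by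
      intro f v
      rw [symm_lie, f.2 x (φ.symm v), symm_lie]
    show ⁅x, φ.symm (p.2.1 (φ.symm q.1)) + φ.symm (q.2.1 (φ.symm p.1))⁆ =
      (φ.symm (((0 : centroid φ) : g →ₗ[k] g') (φ.symm q.1)) +
        φ.symm (q.2.1 (φ.symm ⁅φ x, p.1⁆))) +
      (φ.symm (p.2.1 (φ.symm ⁅φ x, q.1⁆)) +
        φ.symm (((0 : centroid φ) : g →ₗ[k] g') (φ.symm p.1)))
    simp only [key, lie_add, Submodule.coe_zero, LinearMap.zero_apply, map_zero,
      zero_add, add_zero, lieEquiv_map_zero, smul_zero]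
    abel

end
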